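/- Countable model property for InqLTL(~): for every InqLTL(~) formula φ and every uncountable team L_u with L_u ⊨ φ, there exists a countable team L_c ⊆ L_u such that L_c ⊨ φ and, moreover, every team L with L_c ⊆ L ⊆ L_u satisfies φ. -/

import Mathlib

/-- A trace over the set `AP` of atomic propositions. -/
abbrev Trace (AP : Type) := ℕ → Set AP

/-- A team: a set of traces. -/
abbrev Team (AP : Type) := Set (Trace AP)

/-- The suffix `w≥i` of a trace. -/
def Trace.shift {AP : Type} (w : Trace AP) (i : ℕ) : Trace AP := fun j => w (i + j)

/-- The suffix team `L≥i`. -/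
def Team.shift {AP : Type} (L : Team AP) (i : ℕ) : Team AP := (fun w => Trace.shift w i) '' L

/-- InqLTL(~) formulas over `AP`: InqLTL extended with Boolean negation `~`. -/
inductive InqFormN (AP : Type) : Type where
  | bot
  | atom (p : AP)
  | or (φ ψ : InqFormN AP)
  | and (φ ψ : InqFormN AP)
  | imp (φ ψ : InqFormN AP)
  | bneg (φ : InqFormN AP)
  | next (φ : InqFormN AP)
  | untl (φ ψ : InqFormN AP)
  | rel (φ ψ : InqFormN AP)

/-- Team satisfaction for InqLTL(~). -/
def InqFormN.sat {AP : Type} : InqFormN AP → Team AP → Prop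
  | .bot, L => L = ∅
  | .atom p, L => ∀ w ∈ L, p ∈ w 0
  | .or φ ψ, L => φ.sat L ∨ ψ.sat L
  | .and φ ψ, L => φ.sat L ∧ ψ.sat L
  | .imp φ ψ, L => ∀ L' ⊆ L, φ.sat L' → ψ.sat L'
  | .bneg φ, L => ¬ φ.sat L
  | .next φ, L => φ.sat (L.shift 1)
  | .untl φ ψ, L => ∃ i, ψ.sat (L.shift i) ∧ ∀ k < i, φ.sat (L.shift k)
  | .rel φ ψ, L => ∀ i, ψ.sat (L.shift i) ∨ ∃ k < i, φ.sat (L.shift k)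

namespace CMPaux

variable {AP : Type}

/-- `P` is stabilized on `B` by some countable subteam. -/
def Stab (P : Team AP → Prop) (B : Team AP) : Prop :=
  ∃ C, C ⊆ B ∧ C.Countable ∧ ∀ L, C ⊆ L → L ⊆ B → P L

lemma Stab.mono {P Q : Team AP → Prop} {B : Team AP} (h : Stab P B)
    (hpq : ∀ L, L ⊆ B → P L → Q L) : Stab Q B := by
  obtain ⟨C, h1, h2, h3⟩ := h
  exact ⟨C, h1, h2, fun L hCL hLB => hpq L hLB (h3 L hCL hLB)⟩

lemma stab_of_all {P : Team AP → Prop} {B : Team AP} (h : ∀ L, L ⊆ B → P L) : Stab P B :=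
  ⟨∅, Set.empty_subset _, Set.countable_empty, fun L _ hLB => h L hLB⟩

lemma stab_imp_const {c : Prop} {P : Team AP → Prop} {B : Team AP}
    (h : c → Stab P B) : Stab (fun L => c → P L) B := by
  by_cases hc : c
  · exact (h hc).mono fun L _ hP _ => hP
  · exact stab_of_all fun L _ hc' => absurd hc' hc

lemma stab_and {P Q : Team AP → Prop} {B : Team AP} (hP : Stab P B) (hQ : Stab Q B) :
    Stab (fun L => P L ∧ Q L) B := by
  obtain ⟨C1, hs1, hc1, h1⟩ := hP
  obtain ⟨C2, hs2, hc2, h2⟩ := hQ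
  exact ⟨C1 ∪ C2, Set.union_subset hs1 hs2, hc1.union hc2,
    fun L hCL hLB => ⟨h1 L (Set.subset_union_left.trans hCL) hLB,
                      h2 L (Set.subset_union_right.trans hCL) hLB⟩⟩

lemma stab_forall {ι : Type} [Countable ι] {P : ι → Team AP → Prop} {B : Team AP}
    (h : ∀ n, Stab (P n) B) : Stab (fun L => ∀ n, P n L) B := by
  choose C hsub hcnt hP using h
  exact ⟨⋃ n, C n, Set.iUnion_subset hsub, Set.countable_iUnion hcnt,
    fun L hCL hLB n => hP n L ((Set.subset_iUnion C n).trans hCL) hLB⟩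

lemma stab_shift {P : Team AP → Prop} {B : Team AP} (i : ℕ) (h : Stab P (B.shift i)) :
    Stab (fun L => P (L.shift i)) B := by
  obtain ⟨C', hC'B, hcnt, hP⟩ := h
  have hex : ∀ w : C', ∃ x, x ∈ B ∧ Trace.shift x i = (w : Trace AP) := fun w => hC'B w.2
  choose f hfB hfs using hex
  have := hcnt.to_subtype
  refine ⟨Set.range f, ?_, Set.countable_range f, ?_⟩
  · rintro _ ⟨w, rfl⟩; exact hfB w
  · intro L hCL hLB
    apply hP
    · intro w hw
      exact ⟨f ⟨w, hw⟩, hCL ⟨⟨w, hw⟩, rfl⟩, hfs ⟨w, hw⟩⟩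
    · exact Set.image_mono hLB

theorem stab_main (φ : InqFormN AP) : ∀ B : Team AP,
    (φ.sat B → Stab φ.sat B) ∧ (¬ φ.sat B → Stab (fun L => ¬ φ.sat L) B) := by
  induction φ with
  | bot =>
    intro B
    constructor
    · intro h
      exact stab_of_all fun L hLB => by
        simp only [InqFormN.sat] at *
        exact Set.subset_empty_iff.mp (h ▸ hLB)
    · intro h
      simp only [InqFormN.sat] at h
      obtain ⟨w, hw⟩ := Set.nonempty_iff_ne_empty.mpr h
      refine ⟨{w}, Set.singleton_subset_iff.mpr hw, Set.countable_singleton w, ?_⟩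
      intro L hCL _
      simp only [InqFormN.sat]
      exact Set.nonempty_iff_ne_empty.mp ⟨w, hCL rfl⟩
  | atom p =>
    intro B
    constructor
    · intro h
      exact stab_of_all fun L hLB w hw => h w (hLB hw)
    · intro h
      simp only [InqFormN.sat, not_forall] at h
      obtain ⟨w, hwB, hwp⟩ := h
      refine ⟨{w}, Set.singleton_subset_iff.mpr hwB, Set.countable_singleton w, ?_⟩
      intro L hCL _ hall
      exact hwp (hall w (hCL rfl))
  | or φ ψ ihφ ihψ =>
    intro B
    constructor
    · rintro (h | h)
      · exact ((ihφ B).1 h).mono fun L _ hP => Or.inl hP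
      · exact ((ihψ B).1 h).mono fun L _ hP => Or.inr hP
    · intro h
      simp only [InqFormN.sat, not_or] at h
      exact (stab_and ((ihφ B).2 h.1) ((ihψ B).2 h.2)).mono
        fun L _ hP hor => hor.elim hP.1 hP.2
  | and φ ψ ihφ ihψ =>
    intro B
    constructor
    · intro h
      exact (stab_and ((ihφ B).1 h.1) ((ihψ B).1 h.2)).mono fun L _ hP => hP
    · intro h
      rcases not_and_or.mp h with h | h
      · exact ((ihφ B).2 h).mono fun L _ hP hand => hP hand.1
      · exact ((ihψ B).2 h).mono fun L _ hP hand => hP hand.2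
  | imp φ ψ ihφ ihψ =>
    intro B
    constructor
    · intro h
      exact stab_of_all fun L hLB L' hL' hφ' => h L' (hL'.trans hLB) hφ'
    · intro h
      simp only [InqFormN.sat, not_forall] at h
      obtain ⟨L', hL'B, hφ', hψ'⟩ := h
      obtain ⟨C1, hs1, hc1, h1⟩ := (ihφ L').1 hφ'
      obtain ⟨C2, hs2, hc2, h2⟩ := (ihψ L').2 hψ'
      refine ⟨C1 ∪ C2, (Set.union_subset hs1 hs2).trans hL'B, hc1.union hc2, ?_⟩
      intro L hCL _ himp
      have hsub : C1 ∪ C2 ⊆ L ∩ L' := Set.subset_inter hCL (Set.union_subset hs1 hs2)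
      have hφ'' : φ.sat (L ∩ L') :=
        h1 _ (Set.subset_union_left.trans hsub) Set.inter_subset_right
      have hψ'' : ¬ ψ.sat (L ∩ L') :=
        h2 _ (Set.subset_union_right.trans hsub) Set.inter_subset_right
      exact hψ'' (himp _ Set.inter_subset_left hφ'')
  | bneg φ ihφ =>
    intro B
    constructor
    · intro h
      exact ((ihφ B).2 h).mono fun L _ hP => hP
    · intro h
      simp only [InqFormN.sat, not_not] at h
      exact ((ihφ B).1 h).mono fun L _ hP hn => hn hP
  | next φ ihφ =>
    intro B
    constructor
    · intro h
      exact (stab_shift 1 ((ihφ (B.shift 1)).1 h)).mono fun L _ hP => hP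
    · intro h
      exact (stab_shift 1 ((ihφ (B.shift 1)).2 h)).mono fun L _ hP => hP
  | untl φ ψ ihφ ihψ =>
    intro B
    constructor
    · intro h
      obtain ⟨i, hψi, hφk⟩ := h
      have key : Stab (fun L => ∀ k : ℕ,
          (k < i → φ.sat (L.shift k)) ∧ (k = i → ψ.sat (L.shift i))) B := by
        refine stab_forall fun k => stab_and ?_ ?_
        · exact stab_imp_const fun hk => stab_shift k ((ihφ (B.shift k)).1 (hφk k hk))
        · exact stab_imp_const fun _ => stab_shift i ((ihψ (B.shift i)).1 hψi)
      exact key.mono fun L _ hP =>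
        ⟨i, (hP i).2 rfl, fun k hk => (hP k).1 hk⟩
    · intro h
      have h' : ∀ i, ¬ ψ.sat (B.shift i) ∨ ∃ k < i, ¬ φ.sat (B.shift k) := by
        intro i
        by_contra hcon
        push_neg at hcon
        exact h ⟨i, hcon.1, hcon.2⟩
      have key : Stab (fun L => ∀ j : ℕ,
          (¬ ψ.sat (B.shift j) → ¬ ψ.sat (L.shift j)) ∧
          (¬ φ.sat (B.shift j) → ¬ φ.sat (L.shift j))) B := by
        refine stab_forall fun j => stab_and ?_ ?_
        · exact stab_imp_const fun hj => stab_shift j ((ihψ (B.shift j)).2 hj)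
        · exact stab_imp_const fun hj => stab_shift j ((ihφ (B.shift j)).2 hj)
      refine key.mono fun L _ hP hu => ?_
      obtain ⟨i, hψi, hφk⟩ := hu
      rcases h' i with hc | ⟨k, hk, hc⟩
      · exact (hP i).1 hc hψi
      · exact (hP k).2 hc (hφk k hk)
  | rel φ ψ ihφ ihψ =>
    intro B
    constructor
    · intro h
      have key : Stab (fun L => ∀ j : ℕ,
          (ψ.sat (B.shift j) → ψ.sat (L.shift j)) ∧
          (φ.sat (B.shift j) → φ.sat (L.shift j))) B := by
        refine stab_forall fun j => stab_and ?_ ?_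
        · exact stab_imp_const fun hj => stab_shift j ((ihψ (B.shift j)).1 hj)
        · exact stab_imp_const fun hj => stab_shift j ((ihφ (B.shift j)).1 hj)
      refine key.mono fun L _ hP i => ?_
      rcases h i with hc | ⟨k, hk, hc⟩
      · exact Or.inl ((hP i).1 hc)
      · exact Or.inr ⟨k, hk, (hP k).2 hc⟩
    · intro h
      simp only [InqFormN.sat, not_forall, not_or, not_exists] at h
      obtain ⟨i, hψi, hφk⟩ := h
      have key : Stab (fun L => ∀ k : ℕ,
          (k < i → ¬ φ.sat (L.shift k)) ∧ (k = i → ¬ ψ.sat (L.shift i))) B := by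
        refine stab_forall fun k => stab_and ?_ ?_
        · exact stab_imp_const fun hk => stab_shift k ((ihφ (B.shift k)).2 fun hφ' => hφk k ⟨hk, hφ'⟩)
        · exact stab_imp_const fun _ => stab_shift i ((ihψ (B.shift i)).2 hψi)
      refine key.mono fun L _ hP hr => ?_
      rcases hr i with hc | ⟨k, hk, hc⟩
      · exact (hP i).2 rfl hc
      · exact (hP k).1 hk hc

end CMPaux

/-- Countable model property for InqLTL(~). -/
theorem inqLTLN_countable_model_property {AP : Type} [Fintype AP]
    (φ : InqFormN AP) (Lu : Team AP) (huncount : ¬ Lu.Countable) (hsat : φ.sat Lu) :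
    ∃ Lc : Team AP, Lc ⊆ Lu ∧ Lc.Countable ∧ φ.sat Lc ∧
      ∀ L : Team AP, Lc ⊆ L → L ⊆ Lu → φ.sat L := by
  obtain ⟨C, hsub, hcnt, hall⟩ := (CMPaux.stab_main φ Lu).1 hsat
  exact ⟨C, hsub, hcnt, hall C subset_rfl hsub, hall⟩
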